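/- The concentric flow boundary value problem on the annulus {1/2 ≤ |x| ≤ 2} with piecewise viscosity μ = 2𝟙_{0<r<1} + 𝟙_{r≥1} and boundary conditions g(1/2) = g₋, g(2) = g₊ is satisfied by the piecewise profile g iff C = (3 ln2/4)^{-1}(9C₁/8 − g₊ + g₋) and C₂ = (1/3)(9C₁/8 + g₊ + 2g₋); in particular there are uncountably many solutions parametrized by C₁ ∈ ℝ. -/

import Mathlib

/-- The piecewise concentric-flow profile with viscosity `2` for `r<1`, `1` for `r≥1`. -/
noncomputable def concg (C C₁ C₂ : ℝ) (r : ℝ) : ℝ :=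
  if r < 1 then -C / 4 * Real.log r - C₁ / 4 * (1 / r ^ 2 - 1) + C₂
  else -C / 2 * Real.log r - C₁ / 2 * (1 / r ^ 2 - 1) + C₂

/-- Concentric boundary value problem on the annulus `{1/2 ≤ |x| ≤ 2}`:
`g(1/2) = g₋` and `g(2) = g₊` iff `C = (3 ln2/4)⁻¹(9C₁/8 - g₊ + g₋)` and
`C₂ = (1/3)(9C₁/8 + g₊ + 2g₋)`; the solutions are injectively parametrized by
`C₁ ∈ ℝ`, so there are uncountably many of them. -/
theorem stmt15 (gm gp : ℝ) :
    (∀ C C₁ C₂ : ℝ,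
      (concg C C₁ C₂ (1 / 2) = gm ∧ concg C C₁ C₂ 2 = gp) ↔
      (C = (3 * Real.log 2 / 4)⁻¹ * (9 * C₁ / 8 - gp + gm) ∧
       C₂ = (1 / 3) * (9 * C₁ / 8 + gp + 2 * gm))) ∧
    Function.Injective (fun C₁ : ℝ =>
      concg ((3 * Real.log 2 / 4)⁻¹ * (9 * C₁ / 8 - gp + gm)) C₁
        ((1 / 3) * (9 * C₁ / 8 + gp + 2 * gm))) := by
  have hL : Real.log 2 ≠ 0 := (Real.log_pos (by norm_num)).ne'
  constructor
  · intro C C₁ C₂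
    simp only [concg, show ((1:ℝ)/2) < 1 by norm_num, if_true,
      show ¬((2:ℝ) < 1) by norm_num, if_false,
      show ((1:ℝ)/2) = 2⁻¹ by norm_num, Real.log_inv]
    constructor
    · rintro ⟨h1, h2⟩
      norm_num at h1 h2
      constructor
      · field_simp
        nlinarith [h1, h2]
      · field_simp
        nlinarith [h1, h2]
    · rintro ⟨hC, hC2⟩
      subst hC hC2
      constructor
      · field_simp; norm_num; ring
      · field_simp; ring
  · intro a b hab
    have h := congrFun hab 1
    simp only [concg, show ¬((1:ℝ) < 1) by norm_num, if_false, Real.log_one] at h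
    norm_num at h
    linarith
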